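/- Let (g,[·,·],φ) be a regular Hom-Lie algebra. Then: (1) φ is an automorphism of (g,[·,·],φ); (2) if θ is an automorphism of (g,[·,·],φ), then so are its inverse θ⁻¹ and φ∘θ∘φ⁻¹; (3) if θ₁ and θ₂ are automorphisms of (g,[·,·],φ), then so is θ₁ ⋄ θ₂ := φ∘θ₁∘φ⁻¹∘θ₂∘φ⁻¹. Hence the set Aut(g) of automorphisms, with product ⋄, Hom-unit φ, and structure map θ ↦ φ∘θ∘φ⁻¹, is a Hom-subgroup of the regular Hom-group (GL(g), ⋄, φ, Ad_φ). -/
import Mathlib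


/-- An automorphism of a regular Hom-Lie algebra `(g, b, φ)`: a bijective
linear map `θ` with `θ[x,y] = [(φ⁻¹∘θ∘φ)(x), (φ⁻¹∘θ∘φ)(y)]`. -/
def IsHomLieAut {g : Type*} [AddCommGroup g] [Module ℝ g]
    (b : g →ₗ[ℝ] g →ₗ[ℝ] g) (φ : g ≃ₗ[ℝ] g) (θ : g ≃ₗ[ℝ] g) : Prop :=
  ∀ x y : g, θ (b x y) = b (φ.symm (θ (φ x))) (φ.symm (θ (φ y)))

/-- In a regular Hom-Lie algebra `(g, b, φ)`:
(1) `φ` is an automorphism; (2) if `θ` is an automorphism then so are `θ⁻¹`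
and `φ∘θ∘φ⁻¹`; (3) if `θ₁, θ₂` are automorphisms then so is
`θ₁ ⋄ θ₂ := φ∘θ₁∘φ⁻¹∘θ₂∘φ⁻¹`. Hence `(Aut(g), ⋄, φ, Ad_φ)` is a Hom-subgroup
of the regular Hom-group `(GL(g), ⋄, φ, Ad_φ)`. -/
theorem stmt17 {g : Type*} [AddCommGroup g] [Module ℝ g]
    (b : g →ₗ[ℝ] g →ₗ[ℝ] g) (φ : g ≃ₗ[ℝ] g)
    (hskew : ∀ x y : g, b x y = - b y x)
    (hmul : ∀ x y : g, φ (b x y) = b (φ x) (φ y))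
    (hjac : ∀ x y z : g,
      b (φ x) (b y z) + b (φ y) (b z x) + b (φ z) (b x y) = 0) :
    IsHomLieAut b φ φ ∧
    (∀ θ : g ≃ₗ[ℝ] g, IsHomLieAut b φ θ →
      IsHomLieAut b φ θ⁻¹ ∧ IsHomLieAut b φ (φ * θ * φ⁻¹)) ∧
    (∀ θ₁ θ₂ : g ≃ₗ[ℝ] g, IsHomLieAut b φ θ₁ → IsHomLieAut b φ θ₂ →
      IsHomLieAut b φ (φ * θ₁ * φ⁻¹ * θ₂ * φ⁻¹)) := by
  have hinv : ∀ x y : g, φ.symm (b x y) = b (φ.symm x) (φ.symm y) := by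
    intro x y
    apply φ.injective
    rw [hmul]
    simp
  have hmulapp : ∀ (a c : g ≃ₗ[ℝ] g) (x : g), (a * c) x = a (c x) := fun _ _ _ => rfl
  have hinvapp : ∀ (x : g), (φ⁻¹ : g ≃ₗ[ℝ] g) x = φ.symm x := fun _ => rfl
  refine ⟨?_, ?_, ?_⟩
  · intro x y
    simp [hmul]
  · intro θ hθ
    constructor
    · intro x y
      show θ.symm (b x y) = b (φ.symm (θ.symm (φ x))) (φ.symm (θ.symm (φ y)))
      apply θ.injective
      rw [θ.apply_symm_apply, hθ]
      simp
    · intro x y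
      show φ (θ (φ.symm (b x y))) = _
      rw [hinv, hθ, hmul]
      simp [hmulapp, hinvapp, hinv]
  · intro θ₁ θ₂ h₁ h₂
    intro x y
    simp only [hmulapp, hinvapp]
    rw [hinv, h₂, hinv, h₁, hmul]
    simp
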